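/- If Φ := φ · (φ̃)^{-1} admits an AP antisymmetric factorization Φ = ψ₋ e_{2λ} (ψ̃₋)^{-1}, where φ ∈ GAP, then φ admits an AP asymmetric factorization φ = ψ₋ e_λ φ_e with even factor φ_e = e_{−λ} ψ₋^{-1} φ; in particular φ_e satisfies φ_e(−x) = φ_e(x). -/

import Mathlib

open Filter Set

/-- `p` is a trigonometric polynomial with frequencies in `S`:
`p x = ∑ n, c n * exp (i * λ n * x)` with all `λ n ∈ S`. -/
def IsTrigPoly (S : Set ℝ) (p : ℝ → ℂ) : Prop :=
  ∃ (N : ℕ) (c : Fin N → ℂ) (lam : Fin N → ℝ), (∀ n, lam n ∈ S) ∧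
    ∀ x : ℝ, p x = ∑ n : Fin N, c n * Complex.exp (Complex.I * (lam n) * x)

/-- The uniform closure of the trigonometric polynomials with frequencies in `S`.
For `S = univ` this is the algebra `AP` of almost periodic functions, i.e. the smallest
closed subalgebra of `L^∞(ℝ)` containing all the exponentials `e_λ`, `λ ∈ ℝ`. -/
def APin (S : Set ℝ) : Set (ℝ → ℂ) :=
  {φ | ∃ p : ℕ → ℝ → ℂ, (∀ n, IsTrigPoly S (p n)) ∧ TendstoUniformly p φ atTop}

/-- The algebra `AP` of almost periodic functions. -/
def AP : Set (ℝ → ℂ) := APin Set.univ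

/-- `AP⁻`: the closed subalgebra generated by the exponentials `e_λ` with `λ ≤ 0`. -/
def APminus : Set (ℝ → ℂ) := APin (Set.Iic 0)

/-- `AP⁺`: the closed subalgebra generated by the exponentials `e_λ` with `λ ≥ 0`. -/
def APplus : Set (ℝ → ℂ) := APin (Set.Ici 0)

/-- `GAP`: the group of invertible elements of the algebra `AP`. -/
def GAP : Set (ℝ → ℂ) := {φ | φ ∈ AP ∧ ∃ ψ ∈ AP, ∀ x, φ x * ψ x = 1}

/-- `GAP⁻`: the group of invertible elements of the algebra `AP⁻`. -/
def GAPminus : Set (ℝ → ℂ) := {φ | φ ∈ APminus ∧ ∃ ψ ∈ APminus, ∀ x, φ x * ψ x = 1}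

/-- `GAP⁺`: the group of invertible elements of the algebra `AP⁺`. -/
def GAPplus : Set (ℝ → ℂ) := {φ | φ ∈ APplus ∧ ∃ ψ ∈ APplus, ∀ x, φ x * ψ x = 1}

/-- Boundedness of a function `ℝ → ℂ`. -/
def IsBdd (φ : ℝ → ℂ) : Prop := ∃ C : ℝ, ∀ x, ‖φ x‖ ≤ C

/-- `GL^∞(ℝ)`: bounded functions which are invertible with bounded inverse. -/
def GLinf : Set (ℝ → ℂ) := {φ | IsBdd φ ∧ ∃ ψ, IsBdd ψ ∧ ∀ x, φ x * ψ x = 1}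

/-- `φ = φ₋ e_λ φ_e` is an AP asymmetric factorization of `φ`:
`φ₋ ∈ GAP⁻`, `φ_e ∈ GL^∞(ℝ)` even. -/
def IsAPAsymFactorization (φ φm : ℝ → ℂ) (l : ℝ) (φe : ℝ → ℂ) : Prop :=
  φm ∈ GAPminus ∧ φe ∈ GLinf ∧ (∀ x, φe (-x) = φe x) ∧
    ∀ x : ℝ, φ x = φm x * Complex.exp (Complex.I * l * x) * φe x

/-- `Φ = ψ₋ e_{2λ} (ψ̃₋)⁻¹` is an AP antisymmetric factorization of `Φ`: `ψ₋ ∈ GAP⁻`. -/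
def IsAPAntisymFactorization (Φ ψm : ℝ → ℂ) (l : ℝ) : Prop :=
  ψm ∈ GAPminus ∧
    ∀ x : ℝ, Φ x = ψm x * Complex.exp (Complex.I * (2 * l) * x) * (ψm (-x))⁻¹

/-- If `Φ = φ ⋅ (φ̃)⁻¹` admits an AP antisymmetric factorization `Φ = ψ₋ e_{2λ} (ψ̃₋)⁻¹`,
with `φ ∈ GAP`, then `φ` admits an AP asymmetric factorization `φ = ψ₋ e_λ φ_e` with the
even factor `φ_e = e_{-λ} ψ₋⁻¹ φ`. -/

lemma apin_bdd {S : Set ℝ} {φ : ℝ → ℂ} (h : φ ∈ APin S) : IsBdd φ := by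
  obtain ⟨p, hp, htu⟩ := h
  rw [Metric.tendstoUniformly_iff] at htu
  obtain ⟨n, hn⟩ := (htu 1 one_pos).exists
  obtain ⟨N, c, lam, -, hpn⟩ := hp n
  refine ⟨(∑ i : Fin N, ‖c i‖) + 1, fun x => ?_⟩
  have h1 : ‖p n x‖ ≤ ∑ i : Fin N, ‖c i‖ := by
    rw [hpn]
    refine (norm_sum_le _ _).trans (le_of_eq ?_)
    refine Finset.sum_congr rfl fun i _ => ?_
    rw [norm_mul]
    have : ‖Complex.exp (Complex.I * (lam i) * (x:ℂ))‖ = 1 := by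
      rw [Complex.norm_exp]
      simp [Complex.mul_re]
    rw [this, mul_one]
  have h2 : ‖φ x - p n x‖ ≤ 1 := by
    have := hn x
    rw [dist_eq_norm] at this
    exact this.le
  calc ‖φ x‖ = ‖p n x + (φ x - p n x)‖ := by ring_nf
  _ ≤ ‖p n x‖ + ‖φ x - p n x‖ := norm_add_le _ _
  _ ≤ (∑ i : Fin N, ‖c i‖) + 1 := add_le_add h1 h2

theorem apAsymFactorization_of_apAntisymFactorization' : True := trivial

theorem apAsymFactorization_of_apAntisymFactorization (φ ψm : ℝ → ℂ) (l : ℝ)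
    (hφ : φ ∈ GAP)
    (h : IsAPAntisymFactorization (fun x => φ x * (φ (-x))⁻¹) ψm l) :
    IsAPAsymFactorization φ ψm l
      (fun x => Complex.exp (-(Complex.I * l * x)) * (ψm x)⁻¹ * φ x) := by
  obtain ⟨hψm, hΦ⟩ := h
  obtain ⟨hφAP, χ, hχAP, hχ⟩ := hφ
  obtain ⟨hψmAP, ψ, hψAP, hψ⟩ := hψm
  have hφne : ∀ x, φ x ≠ 0 := fun x => left_ne_zero_of_mul_eq_one (hχ x)
  have hψmne : ∀ x, ψm x ≠ 0 := fun x => left_ne_zero_of_mul_eq_one (hψ x)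
  have hexpne : ∀ z : ℂ, Complex.exp z ≠ 0 := Complex.exp_ne_zero
  have hψinv : ∀ x, (ψm x)⁻¹ = ψ x := fun x =>
    inv_eq_of_mul_eq_one_right (hψ x)
  have hχinv : ∀ x, (φ x)⁻¹ = χ x := fun x =>
    inv_eq_of_mul_eq_one_right (hχ x)
  have hφbdd : IsBdd φ := apin_bdd hφAP
  have hχbdd : IsBdd χ := apin_bdd hχAP
  have hψmbdd : IsBdd ψm := apin_bdd hψmAP
  have hψbdd : IsBdd ψ := apin_bdd hψAP
  have hnorm : ∀ z : ℂ, z.re = 0 → ‖Complex.exp z‖ = 1 := by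
    intro z hz
    rw [Complex.norm_exp, hz, Real.exp_zero]
  refine ⟨⟨hψmAP, ψ, hψAP, hψ⟩, ?_, ?_, ?_⟩
  · -- GLinf
    obtain ⟨C1, hC1⟩ := hψbdd
    obtain ⟨C2, hC2⟩ := hφbdd
    obtain ⟨C3, hC3⟩ := hψmbdd
    obtain ⟨C4, hC4⟩ := hχbdd
    have hC1' : 0 ≤ C1 := le_trans (norm_nonneg _) (hC1 0)
    have hC3' : 0 ≤ C3 := le_trans (norm_nonneg _) (hC3 0)
    constructor
    · refine ⟨C1 * C2, fun x => ?_⟩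
      simp only [norm_mul, hψinv]
      rw [hnorm _ (by simp [Complex.mul_re]), one_mul]
      exact mul_le_mul (hC1 x) (hC2 x) (norm_nonneg _) hC1'
    · refine ⟨fun x => Complex.exp (Complex.I * l * x) * ψm x * χ x,
        ⟨C3 * C4, fun x => ?_⟩, fun x => ?_⟩
      · simp only [norm_mul]
        rw [hnorm _ (by simp [Complex.mul_re]), one_mul]
        exact mul_le_mul (hC3 x) (hC4 x) (norm_nonneg _) hC3'
      · have e1 : Complex.exp (-(Complex.I * l * x)) * Complex.exp (Complex.I * l * x) = 1 := by
          rw [← Complex.exp_add]; ring_nf; exact Complex.exp_zero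
        simp only [hψinv]
        have key : (Complex.exp (-(Complex.I * l * x)) * Complex.exp (Complex.I * l * x)) *
            ((ψ x * ψm x) * (φ x * χ x)) = 1 := by
          rw [e1, mul_comm (ψ x) (ψm x), hψ x, hχ x]; ring
        linear_combination key
  · -- even
    intro x
    simp only
    set E := Complex.exp (Complex.I * l * x) with hE
    have hxcast : Complex.exp (-(Complex.I * (l:ℂ) * ((-x : ℝ):ℂ))) = E := by
      rw [hE]; congr 1; push_cast; ring
    have key : φ x * (φ (-x))⁻¹ = ψm x * (E * E) * (ψm (-x))⁻¹ := by
      have h0 := hΦ x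
      simp only at h0
      rw [h0, hE, ← Complex.exp_add]
      congr 2
      push_cast; ring
    rw [hxcast]
    have hEne : E ≠ 0 := Complex.exp_ne_zero _
    have hEinv : Complex.exp (-(Complex.I * (l:ℂ) * (x:ℂ))) = E⁻¹ := by
      rw [hE, ← Complex.exp_neg]
    rw [hEinv]
    field_simp [hψmne x, hψmne (-x), hφne (-x)] at key ⊢
    linear_combination -key
  · -- factorization
    intro x
    simp only
    rw [Complex.exp_neg]
    field_simp [hψmne x]
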